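/- Let $a<b$ be real and let $T_0,T_1,T_2,T_3:(a,b)\to M_n(\mathbb{C})$ be differentiable, skew-hermitian valued ($T_i(z)^* = -T_i(z)$), and satisfy Nahm's equations $T_i' + [T_0,T_i] = [T_j,T_k]$ for $(i,j,k)$ cyclic permutations of $(1,2,3)$. Let $\mu_0,x_0,x_1,x_2,x_3\in\mathbb{R}$ and set $\alpha = T_0 - iT_3$, $\beta = T_1+iT_2$, $w = x_1+ix_2$, $y = \mu_0 x_0 - ix_3$. For twice-differentiable $s:(a,b)\to\mathbb{C}^n$ define $D_1 s = \bigl(i(s' + (\alpha - iy)s),\ (-\beta + iw)s\bigr)$ and define the formal adjoint $D_1^\star(u_1,u_2) = i u_1' - i(\alpha - iy)^* u_1 + (-\beta + iw)^* u_2$, where $*$ is pointwise conjugate transpose. Then for all twice-differentiable $s$: $D_1^\star(D_1 s) = -\bigl(\tfrac{d}{dz} + (T_0 - i\mu_0 x_0)\bigr)^2 s - \sum_{j=1}^3 (T_j - ix_j)^2 s$, where $(\tfrac{d}{dz}+\gamma)^2 s := (s'+\gamma s)' + \gamma(s'+\gamma s)$. -/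

import Mathlib

open Matrix Set

private lemma hasDerivAt_mulVec' {n : ℕ} (M : ℝ → Matrix (Fin n) (Fin n) ℂ)
    (M' : Matrix (Fin n) (Fin n) ℂ)
    (v : ℝ → Fin n → ℂ) (v' : Fin n → ℂ) (z : ℝ)
    (hM : ∀ i j, HasDerivAt (fun t => M t i j) (M' i j) z)
    (hv : ∀ i, HasDerivAt (fun t => v t i) (v' i) z) :
    ∀ i, HasDerivAt (fun t => (M t *ᵥ v t) i) ((M' *ᵥ v z + M z *ᵥ v') i) z := by
  intro i
  have : HasDerivAt (fun t => ∑ j, M t i j * v t j)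
      (∑ j, (M' i j * v z j + M z i j * v' j)) z :=
    HasDerivAt.fun_sum fun j _ => (hM i j).mul (hv j)
  simpa [Matrix.mulVec, dotProduct, Finset.sum_add_distrib] using this

private lemma comm_shift {n : ℕ} (M N : Matrix (Fin n) (Fin n) ℂ) (k l : ℂ) :
    (M - k • 1) * (N - l • 1) - (N - l • 1) * (M - k • 1) = M * N - N * M := by
  simp only [mul_sub, sub_mul, smul_mul_assoc, mul_smul_comm, one_mul, mul_one, smul_smul]
  module

private lemma mkey {n : ℕ} (γ S1 S2 S3 T0' T3' : Matrix (Fin n) (Fin n) ℂ)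
    (h3 : T3' = (S1*S2 - S2*S1) - (γ*S3 - S3*γ)) :
    (-γ - Complex.I • S3) * (γ - Complex.I • S3)
      + (S1 - Complex.I • S2) * (-(S1 + Complex.I • S2)) - (T0' - Complex.I • T3')
    = -T0' - γ*γ - S1*S1 - S2*S2 - S3*S3 := by
  subst h3
  simp only [mul_sub, sub_mul, mul_add, add_mul, mul_neg, neg_mul, smul_mul_assoc,
    mul_smul_comm, smul_smul, Complex.I_mul_I, neg_smul, one_smul, smul_sub, smul_add]
  module

theorem weitzenbock_identity {n : ℕ} (a b : ℝ) (hab : a < b)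
    (T0 T1 T2 T3 T0' T1' T2' T3' : ℝ → Matrix (Fin n) (Fin n) ℂ)
    (hT0 : ∀ z ∈ Ioo a b, ∀ i j, HasDerivAt (fun t => T0 t i j) (T0' z i j) z)
    (hT1 : ∀ z ∈ Ioo a b, ∀ i j, HasDerivAt (fun t => T1 t i j) (T1' z i j) z)
    (hT2 : ∀ z ∈ Ioo a b, ∀ i j, HasDerivAt (fun t => T2 t i j) (T2' z i j) z)
    (hT3 : ∀ z ∈ Ioo a b, ∀ i j, HasDerivAt (fun t => T3 t i j) (T3' z i j) z)
    (hskew : ∀ z ∈ Ioo a b,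
        (T0 z)ᴴ = -T0 z ∧ (T1 z)ᴴ = -T1 z ∧ (T2 z)ᴴ = -T2 z ∧ (T3 z)ᴴ = -T3 z)
    (hNahm : ∀ z ∈ Ioo a b,
        T1' z + (T0 z * T1 z - T1 z * T0 z) = T2 z * T3 z - T3 z * T2 z ∧
        T2' z + (T0 z * T2 z - T2 z * T0 z) = T3 z * T1 z - T1 z * T3 z ∧
        T3' z + (T0 z * T3 z - T3 z * T0 z) = T1 z * T2 z - T2 z * T1 z)
    (μ0 x0 x1 x2 x3 : ℝ)
    (s s' s'' : ℝ → Fin n → ℂ)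
    (hs : ∀ z ∈ Ioo a b, ∀ i, HasDerivAt (fun t => s t i) (s' z i) z)
    (hs' : ∀ z ∈ Ioo a b, ∀ i, HasDerivAt (fun t => s' t i) (s'' z i) z)
    -- `u1'` is the derivative of `u₁ = i(s' + (α - iy)s)`, the first component of `D₁ s`
    (u1' : ℝ → Fin n → ℂ)
    (hu1 : ∀ z ∈ Ioo a b, ∀ i, HasDerivAt
        (fun t => (Complex.I • (s' t
            + ((T0 t - Complex.I • T3 t)
                - (Complex.I * (((μ0 * x0 : ℝ) : ℂ) - Complex.I * ((x3 : ℝ) : ℂ)))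
                    • (1 : Matrix (Fin n) (Fin n) ℂ)).mulVec (s t))) i)
        (u1' z i) z)
    -- `q'` is the derivative of `q = s' + γ s`, where `γ = T0 - iμ0x0`
    (q' : ℝ → Fin n → ℂ)
    (hq : ∀ z ∈ Ioo a b, ∀ i, HasDerivAt
        (fun t => (s' t
            + (T0 t - (Complex.I * ((μ0 * x0 : ℝ) : ℂ))
                • (1 : Matrix (Fin n) (Fin n) ℂ)).mulVec (s t)) i)
        (q' z i) z) :
    ∀ z ∈ Ioo a b,
      Complex.I • u1' z
        - Complex.I • ((((T0 z - Complex.I • T3 z)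
            - (Complex.I * (((μ0 * x0 : ℝ) : ℂ) - Complex.I * ((x3 : ℝ) : ℂ)))
                • (1 : Matrix (Fin n) (Fin n) ℂ))ᴴ).mulVec
            (Complex.I • (s' z
              + ((T0 z - Complex.I • T3 z)
                  - (Complex.I * (((μ0 * x0 : ℝ) : ℂ) - Complex.I * ((x3 : ℝ) : ℂ)))
                      • (1 : Matrix (Fin n) (Fin n) ℂ)).mulVec (s z))))
        + ((-(T1 z + Complex.I • T2 z)
              + (Complex.I * (((x1 : ℝ) : ℂ) + Complex.I * ((x2 : ℝ) : ℂ)))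
                  • (1 : Matrix (Fin n) (Fin n) ℂ))ᴴ).mulVec
            ((-(T1 z + Complex.I • T2 z)
              + (Complex.I * (((x1 : ℝ) : ℂ) + Complex.I * ((x2 : ℝ) : ℂ)))
                  • (1 : Matrix (Fin n) (Fin n) ℂ)).mulVec (s z))
      = -(q' z + (T0 z - (Complex.I * ((μ0 * x0 : ℝ) : ℂ))
              • (1 : Matrix (Fin n) (Fin n) ℂ)).mulVec
            (s' z + (T0 z - (Complex.I * ((μ0 * x0 : ℝ) : ℂ))
              • (1 : Matrix (Fin n) (Fin n) ℂ)).mulVec (s z)))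
        - ((T1 z - (Complex.I * ((x1 : ℝ) : ℂ)) • (1 : Matrix (Fin n) (Fin n) ℂ))
            * (T1 z - (Complex.I * ((x1 : ℝ) : ℂ)) • (1 : Matrix (Fin n) (Fin n) ℂ))).mulVec (s z)
        - ((T2 z - (Complex.I * ((x2 : ℝ) : ℂ)) • (1 : Matrix (Fin n) (Fin n) ℂ))
            * (T2 z - (Complex.I * ((x2 : ℝ) : ℂ)) • (1 : Matrix (Fin n) (Fin n) ℂ))).mulVec (s z)
        - ((T3 z - (Complex.I * ((x3 : ℝ) : ℂ)) • (1 : Matrix (Fin n) (Fin n) ℂ))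
            * (T3 z - (Complex.I * ((x3 : ℝ) : ℂ)) • (1 : Matrix (Fin n) (Fin n) ℂ))).mulVec (s z) := by
  intro z hz
  obtain ⟨h0, h1, h2, h3⟩ := hskew z hz
  obtain ⟨n1, n2, n3⟩ := hNahm z hz
  -- abbreviations
  set kA : ℂ := Complex.I * (((μ0 * x0 : ℝ) : ℂ) - Complex.I * ((x3 : ℝ) : ℂ)) with hkA
  set kB : ℂ := Complex.I * (((x1 : ℝ) : ℂ) + Complex.I * ((x2 : ℝ) : ℂ)) with hkB
  set kG : ℂ := Complex.I * ((μ0 * x0 : ℝ) : ℂ) with hkG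
  -- the matrix functions
  have hAder : ∀ i j, HasDerivAt
      (fun t => ((T0 t - Complex.I • T3 t) - kA • (1 : Matrix (Fin n) (Fin n) ℂ)) i j)
      ((T0' z - Complex.I • T3' z) i j) z := by
    intro i j
    have := ((hT0 z hz i j).fun_sub ((hT3 z hz i j).const_mul Complex.I)).fun_sub
      (hasDerivAt_const z (kA * (1 : Matrix (Fin n) (Fin n) ℂ) i j))
    simpa [Matrix.sub_apply, Matrix.smul_apply, smul_eq_mul] using this
  have hGder : ∀ i j, HasDerivAt
      (fun t => (T0 t - kG • (1 : Matrix (Fin n) (Fin n) ℂ)) i j) (T0' z i j) z := by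
    intro i j
    have := (hT0 z hz i j).fun_sub (hasDerivAt_const z (kG * (1 : Matrix (Fin n) (Fin n) ℂ) i j))
    simpa [Matrix.sub_apply, Matrix.smul_apply, smul_eq_mul] using this
  -- identify u1' z
  have hu1eq : u1' z = Complex.I • (s'' z
      + ((T0' z - Complex.I • T3' z) *ᵥ s z
        + ((T0 z - Complex.I • T3 z) - kA • (1 : Matrix (Fin n) (Fin n) ℂ)) *ᵥ s' z)) := by
    funext i
    refine (hu1 z hz i).unique ?_
    have hmv := hasDerivAt_mulVec'
      (fun t => (T0 t - Complex.I • T3 t) - kA • (1 : Matrix (Fin n) (Fin n) ℂ))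
      (T0' z - Complex.I • T3' z) s (s' z) z hAder (hs z hz)
    have := ((hs' z hz i).add (hmv i)).const_mul Complex.I
    simpa [Pi.smul_apply, Pi.add_apply, smul_eq_mul] using this
  -- identify q' z
  have hqeq : q' z = s'' z + (T0' z *ᵥ s z
      + (T0 z - kG • (1 : Matrix (Fin n) (Fin n) ℂ)) *ᵥ s' z) := by
    funext i
    refine (hq z hz i).unique ?_
    have hmv := hasDerivAt_mulVec'
      (fun t => T0 t - kG • (1 : Matrix (Fin n) (Fin n) ℂ))
      (T0' z) s (s' z) z hGder (hs z hz)
    exact (hs' z hz i).add (hmv i)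
  rw [hu1eq, hqeq]
  -- matrix abbreviations
  set Am : Matrix (Fin n) (Fin n) ℂ :=
    (T0 z - Complex.I • T3 z) - kA • (1 : Matrix (Fin n) (Fin n) ℂ) with hAm
  set Bm : Matrix (Fin n) (Fin n) ℂ :=
    -(T1 z + Complex.I • T2 z) + kB • (1 : Matrix (Fin n) (Fin n) ℂ) with hBm
  set γm : Matrix (Fin n) (Fin n) ℂ :=
    T0 z - kG • (1 : Matrix (Fin n) (Fin n) ℂ) with hγm
  set S1 : Matrix (Fin n) (Fin n) ℂ :=
    T1 z - (Complex.I * ((x1 : ℝ) : ℂ)) • (1 : Matrix (Fin n) (Fin n) ℂ) with hS1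
  set S2 : Matrix (Fin n) (Fin n) ℂ :=
    T2 z - (Complex.I * ((x2 : ℝ) : ℂ)) • (1 : Matrix (Fin n) (Fin n) ℂ) with hS2
  set S3 : Matrix (Fin n) (Fin n) ℂ :=
    T3 z - (Complex.I * ((x3 : ℝ) : ℂ)) • (1 : Matrix (Fin n) (Fin n) ℂ) with hS3
  -- the decompositions
  have hA : Am = γm - Complex.I • S3 := by
    rw [hAm, hγm, hS3, hkA, hkG]; match_scalars <;> ring
  have hAH : Amᴴ = -γm - Complex.I • S3 := by
    rw [hAm, hγm, hS3, hkA, hkG]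
    simp only [conjTranspose_sub, conjTranspose_smul, conjTranspose_one, h0, h3,
      Complex.star_def, _root_.map_mul, _root_.map_sub, Complex.conj_I, Complex.conj_ofReal]
    match_scalars <;> ring
  have hB : Bm = -(S1 + Complex.I • S2) := by
    rw [hBm, hS1, hS2, hkB]; match_scalars <;> ring
  have hBH : Bmᴴ = S1 - Complex.I • S2 := by
    rw [hBm, hS1, hS2, hkB]
    simp only [conjTranspose_add, conjTranspose_neg, conjTranspose_smul, conjTranspose_one, h1, h2,
      Complex.star_def, _root_.map_mul, _root_.map_add, Complex.conj_I, Complex.conj_ofReal]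
    match_scalars <;> ring
  -- the Nahm input
  have h3' : T3' z = (S1*S2 - S2*S1) - (γm*S3 - S3*γm) := by
    rw [hS1, hS2, hS3, hγm, comm_shift, comm_shift]
    exact eq_sub_of_add_eq n3
  -- matrix identities
  have hM1 : Amᴴ - Am = (-(2:ℂ)) • γm := by rw [hAH, hA]; module
  have hM2 : Amᴴ * Am + Bmᴴ * Bm - (T0' z - Complex.I • T3' z)
      = -T0' z - γm*γm - S1*S1 - S2*S2 - S3*S3 := by
    rw [hAH, hA, hBH, hB, ← mkey γm S1 S2 S3 (T0' z) (T3' z) h3']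
  -- final assembly
  calc Complex.I • (Complex.I • (s'' z
          + ((T0' z - Complex.I • T3' z) *ᵥ s z + Am *ᵥ s' z)))
        - Complex.I • (Amᴴ *ᵥ (Complex.I • (s' z + Am *ᵥ s z)))
        + Bmᴴ *ᵥ (Bm *ᵥ s z)
      = (-(1:ℂ)) • s'' z + ((Amᴴ - Am) *ᵥ s' z
          + (Amᴴ * Am + Bmᴴ * Bm - (T0' z - Complex.I • T3' z)) *ᵥ s z) := by
        simp only [Matrix.mulVec_add, Matrix.add_mulVec, Matrix.sub_mulVec,
          Matrix.mulVec_smul, Matrix.mulVec_mulVec, smul_add, smul_sub, smul_smul,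
          Complex.I_mul_I, neg_smul, one_smul]
        module
    _ = (-(1:ℂ)) • s'' z + (((-(2:ℂ)) • γm) *ᵥ s' z
          + (-T0' z - γm*γm - S1*S1 - S2*S2 - S3*S3) *ᵥ s z) := by rw [hM1, hM2]
    _ = -(s'' z + (T0' z *ᵥ s z + γm *ᵥ s' z) + γm *ᵥ (s' z + γm *ᵥ s z))
          - (S1 * S1) *ᵥ s z - (S2 * S2) *ᵥ s z - (S3 * S3) *ᵥ s z := by
        simp only [Matrix.mulVec_add, Matrix.add_mulVec, Matrix.sub_mulVec,
          Matrix.neg_mulVec, Matrix.smul_mulVec, Matrix.mulVec_mulVec,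
          neg_smul, one_smul]
        module
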